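/- Conversely, if a k×k real matrix A satisfies d(Au, Av) = 0 for all u, v ∈ ℝ^k (projective diameter zero), then A is a (max,+) outer product: there exist c, r ∈ ℝ^k with A_{ij} = c_i + r_j for all i, j. -/

import Mathlib

open Finset Filter

noncomputable def mv {k : ℕ} (A : Fin (k+1) → Fin (k+1) → ℝ) (u : Fin (k+1) → ℝ) :
    Fin (k+1) → ℝ :=
  fun i => Finset.univ.sup' Finset.univ_nonempty (fun j => A i j + u j)

noncomputable def pd {k : ℕ} (u v : Fin (k+1) → ℝ) : ℝ :=
  Finset.univ.sup' Finset.univ_nonempty (fun i => u i - v i) +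
  Finset.univ.sup' Finset.univ_nonempty (fun i => v i - u i)

lemma pd_zero_const {k : ℕ} {u v : Fin (k+1) → ℝ} (h : pd u v = 0) :
    ∀ i, u i - v i = u 0 - v 0 := by
  unfold pd at h
  set M := Finset.univ.sup' Finset.univ_nonempty (fun i => u i - v i) with hM
  set m := Finset.univ.sup' Finset.univ_nonempty (fun i => v i - u i) with hm
  have key : ∀ i, u i - v i = M := by
    intro i
    have h1 : u i - v i ≤ M := Finset.le_sup' (fun i => u i - v i) (Finset.mem_univ i)
    have h2 : v i - u i ≤ m := Finset.le_sup' (fun i => v i - u i) (Finset.mem_univ i)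
    have : m = -M := by linarith
    linarith [this ▸ h2]
  intro i
  rw [key i, key 0]

lemma mv_delta {k : ℕ} (A : Fin (k+1) → Fin (k+1) → ℝ) (j : Fin (k+1)) :
    mv A (fun l => if l = j then 0 else
      -(Finset.univ.sup' Finset.univ_nonempty
        (fun p : Fin (k+1) × Fin (k+1) => A p.1 p.2 - A p.1 j))) = fun i => A i j := by
  set T := Finset.univ.sup' Finset.univ_nonempty
      (fun p : Fin (k+1) × Fin (k+1) => A p.1 p.2 - A p.1 j) with hT
  funext i
  unfold mv
  apply le_antisymm
  · apply Finset.sup'_le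
    intro l _
    by_cases hl : l = j
    · simp [hl]
    · simp only [if_neg hl]
      have : A i l - A i j ≤ T := Finset.le_sup' (fun p : Fin (k+1) × Fin (k+1) => A p.1 p.2 - A p.1 j) (Finset.mem_univ (i, l))
      linarith
  · have := Finset.le_sup' (f := fun l => A i l + if l = j then 0 else -T)
      (Finset.mem_univ j)
    simp only [↓reduceIte, add_zero] at this
    exact this

/-- A matrix of projective diameter zero is a (max,+) outer product. -/
theorem pd_zero_rank_one {k : ℕ} (A : Fin (k+1) → Fin (k+1) → ℝ)
    (h : ∀ u v : Fin (k+1) → ℝ, pd (mv A u) (mv A v) = 0) :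
    ∃ c r : Fin (k+1) → ℝ, ∀ i j, A i j = c i + r j := by
  refine ⟨fun i => A i 0, fun j => A 0 j - A 0 0, ?_⟩
  intro i j
  have h1 := h (fun l => if l = j then 0 else
      -(Finset.univ.sup' Finset.univ_nonempty
        (fun p : Fin (k+1) × Fin (k+1) => A p.1 p.2 - A p.1 j)))
    (fun l => if l = (0 : Fin (k+1)) then 0 else
      -(Finset.univ.sup' Finset.univ_nonempty
        (fun p : Fin (k+1) × Fin (k+1) => A p.1 p.2 - A p.1 0)))
  rw [mv_delta A j, mv_delta A 0] at h1
  have := pd_zero_const h1 i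
  show A i j = A i 0 + (A 0 j - A 0 0)
  linarith
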